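/- Let A be the l×l matrix over a commutative ring with a_{tt} = 1 for all t, a_{t+1,t} = −λ_t for 1 ≤ t ≤ l−1, a_{1,l} = −λ_l, and all other entries 0. Then det(A) = 1 − λ_1 λ_2 ⋯ λ_l. Moreover, if the ring is a field, A has corank 0 or 1, and corank 1 if and only if λ_1 λ_2 ⋯ λ_l = 1. -/

import Mathlib

/-- The `l × l` matrix with `1` on the diagonal, `−λ_t` in position `(t+1, t)` for
`1 ≤ t ≤ l−1`, `−λ_l` in position `(1, l)`, and `0` elsewhere. -/
def cyclicA {l : ℕ} {R : Type*} [CommRing R] (lam : Fin l → R) :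
    Matrix (Fin l) (Fin l) R :=
  fun s t => (if s = t then 1 else 0) - (if (s : ℕ) = ((t : ℕ) + 1) % l then lam t else 0)

lemma cyclicA_apply {l : ℕ} [NeZero l] {R : Type*} [CommRing R] (lam : Fin l → R) (s t : Fin l) :
    cyclicA lam s t = (if s = t then 1 else 0) - (if s = t + 1 then lam t else 0) := by
  have h : ((t + 1 : Fin l) : ℕ) = ((t : ℕ) + 1) % l := by
    simp [Fin.add_def, Fin.val_one', Nat.add_mod, Nat.mod_mod_of_dvd]
  have h2 : ((s : ℕ) = ((t : ℕ) + 1) % l) ↔ s = t + 1 := by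
    rw [← h, Fin.ext_iff]
  unfold cyclicA
  congr 1
  simp only [h2]

open Fin.CommRing in
lemma perm_eq_one_or_rot {n : ℕ} (σ : Equiv.Perm (Fin (n+2)))
    (h : ∀ i, σ i = i ∨ σ i = i + 1) : σ = 1 ∨ σ = finRotate (n+2) := by
  by_cases h1 : σ = 1
  · exact Or.inl h1
  right
  obtain ⟨i0, hi0⟩ : ∃ i, σ i ≠ i := by
    by_contra hc
    push_neg at hc
    exact h1 (Equiv.ext fun i => hc i)
  have hone : (1 : Fin (n+2)) ≠ 0 := by simp [Fin.ext_iff]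
  have key : ∀ k : ℕ, σ (i0 + (k : Fin (n+2))) = i0 + k + 1 := by
    intro k
    induction k with
    | zero => simpa using (h i0).resolve_left hi0
    | succ k ih =>
      have hcast : ((k+1 : ℕ) : Fin (n+2)) = (k : Fin (n+2)) + 1 := by push_cast; ring
      rw [hcast, ← add_assoc]
      set j := i0 + (k : Fin (n+2)) with hj
      rcases h (j + 1) with h' | h'
      · exfalso
        have : σ (j + 1) = σ j := by rw [h', ih]
        have hj' : j + 1 = j := σ.injective this
        exact hone (by linear_combination hj')
      · exact h'
  refine Equiv.ext fun j => ?_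
  have := key (j - i0).val
  rw [Fin.cast_val_eq_self] at this
  have hji : i0 + (j - i0) = j := by ring
  rw [hji] at this
  rw [this, finRotate_succ_apply]

open Fin.CommRing in
lemma det_cyclicA {l : ℕ} (hl : 0 < l) {R : Type*} [CommRing R] (lam : Fin l → R) :
    (cyclicA lam).det = 1 - ∏ t, lam t := by
  haveI : NeZero l := ⟨hl.ne'⟩
  obtain ⟨m, rfl⟩ := Nat.exists_eq_succ_of_ne_zero hl.ne'
  match m, lam with
  | 0, lam =>
    rw [Matrix.det_fin_one, Fin.prod_univ_one]
    show cyclicA lam 0 0 = _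
    rw [cyclicA_apply]
    norm_num
  | n+1, lam =>
    rw [Matrix.det_apply]
    have hone : (1 : Fin (n+2)) ≠ 0 := by simp [Fin.ext_iff]
    have hne : (1 : Equiv.Perm (Fin (n+2))) ≠ finRotate (n+2) := by
      intro hh
      have h0 : (1 : Equiv.Perm (Fin (n+2))) 0 = finRotate (n+2) 0 := by rw [hh]
      simp [Fin.ext_iff] at h0
    rw [Finset.sum_eq_add_of_mem 1 (finRotate (n+2)) (Finset.mem_univ _) (Finset.mem_univ _) hne]
    · have h1 : (Equiv.Perm.sign (1 : Equiv.Perm (Fin (n+2)))) •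
          (∏ i, cyclicA lam ((1 : Equiv.Perm (Fin (n+2))) i) i) = 1 := by
        have : ∀ i : Fin (n+2), cyclicA lam i i = 1 := by
          intro i
          rw [cyclicA_apply, if_pos rfl, if_neg, sub_zero]
          intro hh
          exact hone (by linear_combination -hh)
        simp only [Equiv.Perm.one_apply, this, Finset.prod_const_one, map_one, one_smul]
      have h2 : (Equiv.Perm.sign (finRotate (n+2))) •
          (∏ i, cyclicA lam (finRotate (n+2) i) i) = -(∏ t, lam t) := by
        have hA : ∀ i : Fin (n+2), cyclicA lam (finRotate (n+2) i) i = -lam i := by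
          intro i
          rw [finRotate_succ_apply, cyclicA_apply, if_pos rfl, if_neg, zero_sub]
          intro hh
          exact hone (by linear_combination hh)
        rw [sign_finRotate]
        simp only [hA]
        have hprod : (∏ x : Fin (n+2), -lam x) = (-1 : R)^(n+2) * ∏ x : Fin (n+2), lam x := by
          rw [show (fun x : Fin (n+2) => -lam x) = (fun x => (-1 : R) * lam x) by funext x; ring]
          rw [Finset.prod_mul_distrib, Finset.prod_const, Finset.card_univ, Fintype.card_fin]
        rw [hprod]
        rw [Units.smul_def]
        push_cast
        rw [zsmul_eq_mul]
        push_cast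
        rw [← mul_assoc, ← pow_add]
        have hodd : Odd (n + 1 + (n + 2)) := ⟨n + 1, by ring⟩
        rw [hodd.neg_one_pow]
        ring
      rw [h1, h2]
      ring
    · intro σ _ hσ
      obtain ⟨i, hi1, hi2⟩ : ∃ i, σ i ≠ i ∧ σ i ≠ i + 1 := by
        by_contra hc
        push_neg at hc
        have : ∀ i, σ i = i ∨ σ i = i + 1 := by
          intro i
          by_cases h' : σ i = i
          · exact Or.inl h'
          · exact Or.inr (hc i h')
        rcases perm_eq_one_or_rot σ this with h' | h'
        · exact hσ.1 h'
        · exact hσ.2 h'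
      have : cyclicA lam (σ i) i = 0 := by
        rw [cyclicA_apply, if_neg hi1, if_neg hi2, sub_zero]
      rw [Finset.prod_eq_zero (f := fun j => cyclicA lam (σ j) j) (Finset.mem_univ i) this,
        smul_zero]

open Fin.CommRing in
lemma cyclicA_mulVec {l : ℕ} [NeZero l] {K : Type} [Field K] (lam : Fin l → K)
    (x : Fin l → K) (s : Fin l) :
    (cyclicA lam).mulVec x s = x s - lam (s - 1) * x (s - 1) := by
  simp only [Matrix.mulVec, dotProduct, cyclicA_apply, sub_mul,
    Finset.sum_sub_distrib, ite_mul, one_mul, zero_mul]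
  congr 1
  · rw [Finset.sum_ite_eq (Finset.univ) s x, if_pos (Finset.mem_univ s)]
  · rw [show (fun t : Fin l => if s = t + 1 then lam t * x t else 0)
        = (fun t => if t = s - 1 then lam t * x t else 0) by
      funext t
      congr 1
      simp only [eq_iff_iff]
      constructor
      · intro hh; rw [hh]; ring
      · intro hh; rw [hh]; ring]
    rw [Finset.sum_ite_eq' Finset.univ (s - 1) (fun t => lam t * x t),
      if_pos (Finset.mem_univ _)]

lemma mem_ker_iff {l : ℕ} [NeZero l] {K : Type} [Field K] (lam : Fin l → K)
    (x : Fin l → K) :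
    (cyclicA lam).mulVecLin x = 0 ↔ ∀ t, x (t + 1) = lam t * x t := by
  rw [Matrix.mulVecLin_apply, funext_iff]
  constructor
  · intro h t
    have := h (t + 1)
    rw [cyclicA_mulVec, add_sub_cancel_right] at this
    simp only [Pi.zero_apply] at this
    exact sub_eq_zero.mp this
  · intro h s
    have := h (s - 1)
    rw [sub_add_cancel] at this
    rw [cyclicA_mulVec, this]
    simp

open Fin.CommRing in
lemma ker_eq_zero_of_zero {l : ℕ} [NeZero l] {K : Type} [Field K] (lam : Fin l → K)
    (x : Fin l → K) (hx : ∀ t, x (t + 1) = lam t * x t) (h0 : x 0 = 0) : x = 0 := by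
  have key : ∀ k : ℕ, x (k : Fin l) = 0 := by
    intro k
    induction k with
    | zero => simpa using h0
    | succ k ih =>
      have hcast : ((k+1 : ℕ) : Fin l) = (k : Fin l) + 1 := by push_cast; ring
      rw [hcast, hx, ih, mul_zero]
  funext j
  have := key j.val
  rwa [Fin.cast_val_eq_self] at this

lemma fin_val_add_one {l : ℕ} [NeZero l] (t : Fin l) :
    ((t + 1 : Fin l) : ℕ) = ((t : ℕ) + 1) % l := by
  simp [Fin.add_def, Fin.val_one', Nat.add_mod, Nat.mod_mod_of_dvd]

lemma exists_ker_vec {l : ℕ} [NeZero l] {K : Type} [Field K] (lam : Fin l → K)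
    (hprod : ∏ t, lam t = 1) :
    ∃ v : Fin l → K, (∀ t, v (t + 1) = lam t * v t) ∧ v 0 = 1 := by
  have hIio0 : Finset.Iio (0 : Fin l) = ∅ := by
    ext j
    simp only [Finset.mem_Iio, Finset.notMem_empty, iff_false, Fin.lt_def, Fin.val_zero]
    omega
  have hnotmem : ∀ t : Fin l, t ∉ Finset.Iio t := by
    intro t
    simp [Finset.mem_Iio]
  refine ⟨fun k => ∏ j ∈ Finset.Iio k, lam j, ?_, ?_⟩
  · intro t
    dsimp only
    by_cases h : (t : ℕ) + 1 < l
    · have hval : ((t + 1 : Fin l) : ℕ) = (t : ℕ) + 1 := by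
        rw [fin_val_add_one, Nat.mod_eq_of_lt h]
      have hins : Finset.Iio (t + 1 : Fin l) = insert t (Finset.Iio t) := by
        ext j
        simp only [Finset.mem_Iio, Finset.mem_insert, Fin.lt_def, hval, Fin.ext_iff]
        omega
      rw [hins, Finset.prod_insert (hnotmem t)]
    · have hl1 : (t : ℕ) + 1 = l := by omega
      have hval : (t + 1 : Fin l) = 0 := by
        rw [Fin.ext_iff, fin_val_add_one, hl1, Nat.mod_self, Fin.val_zero]
      have huniv : (Finset.univ : Finset (Fin l)) = insert t (Finset.Iio t) := by
        ext j
        simp only [Finset.mem_univ, Finset.mem_insert, Finset.mem_Iio, Fin.lt_def,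
          Fin.ext_iff, true_iff]
        have hj := j.isLt
        omega
      rw [hval, hIio0, Finset.prod_empty, ← hprod, huniv, Finset.prod_insert (hnotmem t)]
  · dsimp only
    rw [hIio0, Finset.prod_empty]

/-- `det A = 1 − λ_1 λ_2 ⋯ λ_l`; moreover over a field the corank of `A`
is `0` or `1`, and it is `1` if and only if `λ_1 λ_2 ⋯ λ_l = 1`. -/
theorem stmt15 {l : ℕ} (hl : 0 < l) :
    (∀ (R : Type) [CommRing R] (lam : Fin l → R),
      (cyclicA lam).det = 1 - ∏ t, lam t) ∧
    (∀ (K : Type) [Field K] (lam : Fin l → K),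
      Module.finrank K (LinearMap.ker (cyclicA lam).mulVecLin) ≤ 1 ∧
      (Module.finrank K (LinearMap.ker (cyclicA lam).mulVecLin) = 1 ↔ ∏ t, lam t = 1)) := by
  haveI : NeZero l := ⟨hl.ne'⟩
  refine ⟨fun R _ lam => det_cyclicA hl lam, fun K _ lam => ?_⟩
  have hle : Module.finrank K (LinearMap.ker (cyclicA lam).mulVecLin) ≤ 1 := by
    have hinj : Function.Injective
        ((LinearMap.proj (0 : Fin l) : ((Fin l → K) →ₗ[K] K)).comp
          (LinearMap.ker (cyclicA lam).mulVecLin).subtype) := by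
      rw [← LinearMap.ker_eq_bot, LinearMap.ker_eq_bot']
      intro m hm
      have hmem := m.2
      rw [LinearMap.mem_ker, mem_ker_iff] at hmem
      have h0 : (m : Fin l → K) 0 = 0 := hm
      exact Subtype.ext (ker_eq_zero_of_zero lam _ hmem h0)
    have := LinearMap.finrank_le_finrank_of_injective hinj
    simpa using this
  refine ⟨hle, ?_, ?_⟩
  · intro h1
    have hker : LinearMap.ker (cyclicA lam).mulVecLin ≠ ⊥ := by
      intro hbot
      rw [hbot] at h1
      simp at h1
    obtain ⟨v, hv, hv0⟩ := Submodule.exists_mem_ne_zero_of_ne_bot hker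
    rw [LinearMap.mem_ker, Matrix.mulVecLin_apply] at hv
    have hdet : (cyclicA lam).det = 0 :=
      (Matrix.exists_mulVec_eq_zero_iff).mp ⟨v, hv0, hv⟩
    rw [det_cyclicA hl] at hdet
    have := sub_eq_zero.mp hdet
    exact this.symm
  · intro hprod
    obtain ⟨v, hv, hv0⟩ := exists_ker_vec lam hprod
    have hvker : v ∈ LinearMap.ker (cyclicA lam).mulVecLin := by
      rw [LinearMap.mem_ker, mem_ker_iff]
      exact hv
    have hvne : v ≠ 0 := by
      intro hh
      rw [hh] at hv0
      simp at hv0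
    have hker : LinearMap.ker (cyclicA lam).mulVecLin ≠ ⊥ := by
      intro hbot
      rw [hbot, Submodule.mem_bot] at hvker
      exact hvne hvker
    have hnz : Module.finrank K (LinearMap.ker (cyclicA lam).mulVecLin) ≠ 0 := by
      intro hh
      exact hker (Submodule.finrank_eq_zero.mp hh)
    omega
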